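/- For integers $2 \le k \le n$, the digraph of Construction (partition into $V_0, \dots, V_{k-1}$ with $|V_0|=1$, the remaining $n-1$ vertices split as evenly as possible into $V_1, \dots, V_{k-1}$, and all arcs from $V_i$ to $V_{i+1 \bmod k}$) contains exactly $\prod_{i=0}^{k-2} \lfloor (n-1+i)/(k-1) \rfloor$ directed cycles. -/

import Mathlib

lemma aux_prod {ι : Type*} [DecidableEq ι] (s : Finset ι) (c : ι → ℕ) (q r : ℕ)
    (hc : ∀ i ∈ s, c i = q ∨ c i = q + 1)
    (hsum : ∑ i ∈ s, c i = q * s.card + r) :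
    ∏ i ∈ s, c i = q ^ (s.card - r) * (q + 1) ^ r := by
  classical
  set A := s.filter (fun i => c i = q + 1) with hA
  set B := s.filter (fun i => ¬ c i = q + 1) with hB
  have hq : ∀ i ∈ B, c i = q := by
    intro i hi
    have := Finset.mem_filter.mp hi
    rcases hc i this.1 with h | h
    · exact h
    · exact absurd h this.2
  have hcAB : A.card + B.card = s.card := Finset.card_filter_add_card_filter_not _
  have hcardA : A.card = r := by
    have h1 : ∑ i ∈ s, c i = ∑ i ∈ A, c i + ∑ i ∈ B, c i :=
      (Finset.sum_filter_add_sum_filter_not s _ c).symm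
    have h2 : ∑ i ∈ A, c i = ∑ _i ∈ A, (q + 1) :=
      Finset.sum_congr rfl (fun i hi => (Finset.mem_filter.mp hi).2)
    have h3 : ∑ i ∈ B, c i = ∑ _i ∈ B, q := Finset.sum_congr rfl hq
    simp only [Finset.sum_const, smul_eq_mul] at h2 h3
    nlinarith [hsum, h1, h2, h3, hcAB]
  have hprod : ∏ i ∈ s, c i = (∏ i ∈ A, c i) * ∏ i ∈ B, c i :=
    (Finset.prod_filter_mul_prod_filter_not s _ c).symm
  have h2 : ∏ i ∈ A, c i = (q + 1) ^ r := by
    rw [Finset.prod_congr rfl (fun i hi => (Finset.mem_filter.mp hi).2), Finset.prod_const,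
      hcardA]
  have h3 : ∏ i ∈ B, c i = q ^ (s.card - r) := by
    rw [Finset.prod_congr rfl hq, Finset.prod_const]
    congr 1
    omega
  rw [hprod, h2, h3, mul_comm]

lemma aux_rhs (M N : ℕ) (hM : 1 ≤ M) :
    ∏ i ∈ Finset.range M, (N + i) / M
      = (N / M) ^ (M - N % M) * (N / M + 1) ^ (N % M) := by
  set q := N / M with hq
  set r := N % M with hrdef
  have hr : r < M := Nat.mod_lt _ hM
  have hN : N = M * q + r := (Nat.div_add_mod N M).symm
  have hterm : ∀ i, (N + i) / M = q + (r + i) / M := by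
    intro i
    have h1 : N + i = M * q + (r + i) := by omega
    rw [h1, Nat.mul_add_div (by omega)]
  rw [Finset.range_eq_Ico, ← Finset.prod_Ico_consecutive _ (Nat.zero_le (M - r)) (by omega)]
  have h1 : ∏ i ∈ Finset.Ico 0 (M - r), (N + i) / M = q ^ (M - r) := by
    rw [Finset.prod_congr rfl (fun i hi => ?_), Finset.prod_const, Nat.card_Ico]
    · rfl
    · rw [hterm i, Nat.div_eq_of_lt (show r + i < M by
        have := Finset.mem_Ico.mp hi; omega), Nat.add_zero]
  have h2 : ∏ i ∈ Finset.Ico (M - r) M, (N + i) / M = (q + 1) ^ r := by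
    rw [Finset.prod_congr rfl (fun i hi => ?_), Finset.prod_const, Nat.card_Ico]
    · congr 1
      omega
    · rw [hterm i]
      have hi' := Finset.mem_Ico.mp hi
      have hd : (r + i) / M = 1 := by
        have hlo : 1 ≤ (r + i) / M := (Nat.one_le_div_iff (by omega)).mpr (by omega)
        have hhi : (r + i) / M < 2 := Nat.div_lt_of_lt_mul (by omega)
        omega
      omega
  rw [h1, h2]

lemma arc_key {V : Type*} (K m : ℕ) (g : V → ZMod (K + 2)) (f : ZMod (m + 2) → V)
    (harc : ∀ i, g (f (i + 1)) = g (f i) + 1) :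
    ∀ j : ℕ, g (f (j : ZMod (m + 2))) = g (f 0) + (j : ZMod (K + 2)) := by
  intro j
  induction j with
  | zero => simp
  | succ j ih =>
    have h1 : ((j + 1 : ℕ) : ZMod (m + 2)) = (j : ZMod (m + 2)) + 1 := by push_cast; ring
    rw [h1, harc, ih]
    push_cast
    ring

lemma cycle_classify {V : Type*} [Fintype V] [DecidableEq V] (K : ℕ)
    (g : V → ZMod (K + 2))
    (h0 : (Finset.univ.filter fun v => g v = 0).card = 1)
    (m : ℕ) (f : ZMod (m + 2) → V) (hinj : Function.Injective f)
    (harc : ∀ i, g (f (i + 1)) = g (f i) + 1) : m = K := by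
  have key := arc_key K m g f harc
  have hdvd : (K + 2) ∣ (m + 2) := by
    have h2 := key (m + 2)
    rw [ZMod.natCast_self] at h2
    have h3 : ((m + 2 : ℕ) : ZMod (K + 2)) = 0 := (left_eq_add.mp h2).symm ▸ rfl
    exact (ZMod.natCast_eq_zero_iff _ _).mp h3
  have hlt : m + 2 < 2 * (K + 2) := by
    by_contra hge
    push_neg at hge
    set a := (g (f 0)).val with ha
    have hav : a < K + 2 := ZMod.val_lt _
    set j1 : ℕ := K + 2 - a with hj1
    set j2 : ℕ := j1 + (K + 2) with hj2
    have hKne : ((K + 2 : ℕ) : ZMod (m + 2)) ≠ 0 := by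
      rw [Ne, ZMod.natCast_eq_zero_iff]
      intro hd
      have := Nat.le_of_dvd (by omega) hd
      omega
    have hne : ((j1 : ℕ) : ZMod (m + 2)) ≠ ((j2 : ℕ) : ZMod (m + 2)) := by
      intro h
      rw [hj2] at h
      push_cast at h
      apply hKne
      have h2 := left_eq_add.mp h
      push_cast
      linear_combination (norm := ring_nf) h2
    have hgf0 : g (f 0) = (a : ZMod (K + 2)) := (ZMod.natCast_rightInverse _).symm
    have hz1 : g (f (j1 : ZMod (m + 2))) = 0 := by
      rw [key, hgf0]
      have : (a : ZMod (K + 2)) + (j1 : ZMod (K + 2)) = ((a + j1 : ℕ) : ZMod (K + 2)) := by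
        push_cast; ring
      rw [this, show a + j1 = K + 2 by omega, ZMod.natCast_self]
    have hz2 : g (f (j2 : ZMod (m + 2))) = 0 := by
      rw [key, hgf0]
      have : (a : ZMod (K + 2)) + (j2 : ZMod (K + 2)) = ((a + j2 : ℕ) : ZMod (K + 2)) := by
        push_cast; ring
      rw [this, show a + j2 = (K + 2) * 2 by omega]
      simp
    have hcard2 : 1 < (Finset.univ.filter fun v => g v = 0).card := by
      apply Finset.one_lt_card.mpr
      refine ⟨f (j1 : ZMod (m + 2)), ?_, f (j2 : ZMod (m + 2)), ?_, ?_⟩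
      · simp [hz1]
      · simp [hz2]
      · intro h
        exact hne (hinj h)
    omega
  obtain ⟨t, ht⟩ := hdvd
  rcases t with _ | _ | t
  · omega
  · omega
  · exfalso
    have h5 : (K + 2) * (t + 1 + 1) ≥ 2 * (K + 2) := by nlinarith
    omega

/-- The arc set of a directed cycle of length `len = m + 2` in a digraph `G`:
an injective map `f : ZMod (m+2) → V` with `G (f i) (f (i+1))` for all `i`,
whose consecutive-pair arcs form exactly the finset `s`. -/
def IsDirCycleArcs {V : Type*} [DecidableEq V] (G : V → V → Prop)
    (s : Finset (V × V)) (len : ℕ) : Prop :=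
  ∃ m : ℕ, len = m + 2 ∧ ∃ f : ZMod (m + 2) → V, Function.Injective f ∧
    (∀ i, G (f i) (f (i + 1))) ∧
    s = Finset.image (fun i => (f i, f (i + 1))) Finset.univ
/-- The blow-up construction (classes given by `g : V → ZMod k`
with `|V_0| = 1`, the remaining `n - 1` vertices split as evenly as possible,
and all arcs from `V_i` to `V_{i+1}`) contains exactly
`∏_{i=0}^{k-2} ⌊(n-1+i)/(k-1)⌋` directed cycles. -/
theorem stmt_7 {V : Type*} [Fintype V] [DecidableEq V] (n k : ℕ)
    (hk : 2 ≤ k) (hkn : k ≤ n) (hcard : Fintype.card V = n)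
    (g : V → ZMod k)
    (h0 : (Finset.univ.filter fun v => g v = 0).card = 1)
    (hsize : ∀ i : ZMod k, i ≠ 0 →
      (Finset.univ.filter fun v => g v = i).card = (n - 1) / (k - 1) ∨
      (Finset.univ.filter fun v => g v = i).card = (n - 1 + (k - 2)) / (k - 1)) :
    {s : Finset (V × V) | ∃ len, IsDirCycleArcs (fun u v => g v = g u + 1) s len}.ncard
      = ∏ i ∈ Finset.range (k - 1), (n - 1 + i) / (k - 1) := by
  classical
  obtain ⟨K, rfl⟩ : ∃ K, k = K + 2 := ⟨k - 2, by omega⟩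
  have e1 : K + 2 - 1 = K + 1 := by omega
  have e2 : K + 2 - 2 = K := by omega
  rw [e1]
  simp only [e1, e2] at hsize
  set q := (n - 1) / (K + 1) with hq
  set r := (n - 1) % (K + 1) with hr
  have hrlt : r < K + 1 := Nat.mod_lt _ (by omega)
  have hd : n - 1 = (K + 1) * q + r := (Nat.div_add_mod _ _).symm
  set T : Set (ZMod (K + 2) → V) := {c | ∀ i, g (c i) = i} with hT
  set Φ : (ZMod (K + 2) → V) → Finset (V × V) :=
    fun c => Finset.image (fun i => (c i, c (i + 1))) Finset.univ with hΦ
  have hSeq : {s : Finset (V × V) | ∃ len, IsDirCycleArcs (fun u v => g v = g u + 1) s len}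
      = Φ '' T := by
    ext s
    simp only [Set.mem_setOf_eq, Set.mem_image]
    constructor
    · rintro ⟨len, m, hlen, f, hinj, harc, rfl⟩
      obtain rfl : K = m := (cycle_classify K g h0 m f hinj harc).symm
      have keyZ : ∀ i : ZMod (K + 2), g (f i) = g (f 0) + i := by
        intro i
        have h1 := arc_key K K g f harc i.val
        rwa [ZMod.natCast_rightInverse i] at h1
      refine ⟨fun i => f (i - g (f 0)), ?_, ?_⟩
      · intro i
        rw [keyZ]
        ring
      · have hpair : (fun i : ZMod (K + 2) => (f (i - g (f 0)), f (i + 1 - g (f 0))))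
            = (fun j => (f j, f (j + 1))) ∘ ⇑(Equiv.subRight (g (f 0))) := by
          funext i
          simp only [Function.comp_apply, Equiv.subRight_apply]
          rw [show i + 1 - g (f 0) = i - g (f 0) + 1 by ring]
        show Finset.image (fun i : ZMod (K + 2) => (f (i - g (f 0)), f (i + 1 - g (f 0))))
            Finset.univ = _
        rw [hpair, ← Finset.image_image, Finset.image_univ_equiv]
    · rintro ⟨c, hcT, rfl⟩
      have hc : ∀ i, g (c i) = i := hcT
      refine ⟨K + 2, K, rfl, c, ?_, ?_, rfl⟩
      · intro i j h
        have := congrArg g h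
        rwa [hc, hc] at this
      · intro i
        rw [hc, hc]
  have hΦinj : Set.InjOn Φ T := by
    intro c hc c' hc' h
    have hcc : ∀ i, g (c i) = i := hc
    have hcc' : ∀ i, g (c' i) = i := hc'
    funext i
    have hmem : (c i, c (i + 1)) ∈ Φ c := Finset.mem_image.mpr ⟨i, Finset.mem_univ _, rfl⟩
    rw [h] at hmem
    obtain ⟨j, _, hj⟩ := Finset.mem_image.mp hmem
    have h1 : c' j = c i := congrArg Prod.fst hj
    have h2 : j = i := by
      have := congrArg g h1
      rwa [hcc' j, hcc i] at this
    rw [← h1, h2]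
  rw [hSeq, Set.ncard_image_of_injOn hΦinj, ← Nat.card_coe_set_eq]
  have e : ↥T ≃ (∀ i : ZMod (K + 2), {v : V // g v = i}) :=
    { toFun := fun c i => ⟨c.1 i, c.2 i⟩
      invFun := fun d => ⟨fun i => (d i).1, fun i => (d i).2⟩
      left_inv := fun c => rfl
      right_inv := fun d => rfl }
  rw [Nat.card_congr e, Nat.card_eq_fintype_card, Fintype.card_pi]
  have hfib : ∀ i : ZMod (K + 2),
      Fintype.card {v : V // g v = i} = (Finset.univ.filter fun v => g v = i).card :=
    fun i => Fintype.card_subtype _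
  rw [Finset.prod_congr rfl (fun i _ => hfib i)]
  rw [← Finset.mul_prod_erase Finset.univ _ (Finset.mem_univ (0 : ZMod (K + 2))), h0, one_mul]
  have hcarde : (Finset.univ.erase (0 : ZMod (K + 2))).card = K + 1 := by
    rw [Finset.card_erase_of_mem (Finset.mem_univ _), Finset.card_univ, ZMod.card]
    omega
  have htot : ∑ i : ZMod (K + 2), (Finset.univ.filter fun v => g v = i).card = n := by
    rw [← hcard, ← Finset.card_univ]
    exact (Finset.card_eq_sum_card_fiberwise (fun v _ => Finset.mem_univ (g v))).symm
  have hsum : ∑ i ∈ Finset.univ.erase (0 : ZMod (K + 2)),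
      (Finset.univ.filter fun v => g v = i).card = n - 1 := by
    have h5 : (Finset.univ.filter fun v => g v = (0 : ZMod (K + 2))).card
        + ∑ i ∈ Finset.univ.erase (0 : ZMod (K + 2)),
          (Finset.univ.filter fun v => g v = i).card
        = ∑ i : ZMod (K + 2), (Finset.univ.filter fun v => g v = i).card :=
      Finset.add_sum_erase Finset.univ
        (fun i : ZMod (K + 2) => (Finset.univ.filter fun v => g v = i).card)
        (Finset.mem_univ (0 : ZMod (K + 2)))
    rw [h0, htot] at h5
    omega
  have hopt2 : (n - 1 + K) / (K + 1) = q ∨ (n - 1 + K) / (K + 1) = q + 1 := by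
    have h1 : n - 1 + K = (K + 1) * q + (r + K) := by omega
    rw [h1, Nat.mul_add_div (by omega)]
    rcases Nat.eq_zero_or_pos r with h | h
    · left
      rw [h, Nat.zero_add, Nat.div_eq_of_lt (by omega), Nat.add_zero]
    · right
      have hlo : 1 ≤ (r + K) / (K + 1) := (Nat.one_le_div_iff (by omega)).mpr (by omega)
      have hhi : (r + K) / (K + 1) < 2 := Nat.div_lt_of_lt_mul (by omega)
      omega
  have hLHS : ∏ i ∈ Finset.univ.erase (0 : ZMod (K + 2)),
      (Finset.univ.filter fun v => g v = i).card = q ^ (K + 1 - r) * (q + 1) ^ r := by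
    have := aux_prod (Finset.univ.erase (0 : ZMod (K + 2)))
      (fun i => (Finset.univ.filter fun v => g v = i).card) q r
      (fun i hi => by
        rcases hsize i (Finset.mem_erase.mp hi).1 with h | h
        · exact Or.inl h
        · rcases hopt2 with h2 | h2
          · exact Or.inl (h.trans h2)
          · exact Or.inr (h.trans h2))
      (by
        rw [hsum, hcarde]
        have : q * (K + 1) = (K + 1) * q := mul_comm _ _
        omega)
    rwa [hcarde] at this
  rw [hLHS, aux_rhs (K + 1) (n - 1) (by omega), ← hq, ← hr]
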